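/- Let x0 ∈ ℝⁿ, a0 = v(x0), r0 = π(x0), and assume r0 ≥ 0. The following six statements are equivalent: (i) r0·(Qx0) = a0·p; (ii) π(x0) = max{π(x) : v(x) ≤ a0} and v(x0) = min{v(x) : π(x) ≥ r0}; (iii) π(x0) = max{π(x) : v(x) ≤ a0}; (iv) π(x0) = max{π(x) : v(x) = a0}; (v) v(x0) = min{v(x) : π(x) ≥ r0}; (vi) v(x0) = min{v(x) : π(x) = r0}. -/

import Mathlib

open Matrix


section aux
variable {n : ℕ} {Q : Matrix (Fin n) (Fin n) ℝ}

lemma mk_qsym (hQ : Q.PosDef) (x y : Fin n → ℝ) :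
    x ⬝ᵥ Q.mulVec y = y ⬝ᵥ Q.mulVec x := by
  have h : Qᵀ = Q := by
    have := hQ.isHermitian
    simpa [Matrix.IsHermitian] using this
  rw [Matrix.dotProduct_mulVec, dotProduct_comm, ← Matrix.vecMul_transpose, h]

lemma mk_qpos (hQ : Q.PosDef) {x : Fin n → ℝ} (hx : x ≠ 0) :
    0 < x ⬝ᵥ Q.mulVec x := by
  have := hQ.dotProduct_mulVec_pos hx
  simpa using this

lemma mk_qnonneg (hQ : Q.PosDef) (x : Fin n → ℝ) : 0 ≤ x ⬝ᵥ Q.mulVec x := by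
  by_cases hx : x = 0
  · simp [hx]
  · exact (mk_qpos hQ hx).le
end aux

section aux2
variable {n : ℕ} {Q : Matrix (Fin n) (Fin n) ℝ}

lemma mk_qCS (hQ : Q.PosDef) (x y : Fin n → ℝ) :
    (x ⬝ᵥ Q.mulVec y) ^ 2 ≤ (x ⬝ᵥ Q.mulVec x) * (y ⬝ᵥ Q.mulVec y) := by
  by_cases hy : y = 0
  · simp [hy]
  · set a := x ⬝ᵥ Q.mulVec x with ha
    set b := y ⬝ᵥ Q.mulVec y with hb
    set c := x ⬝ᵥ Q.mulVec y with hc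
    have hb0 : 0 < b := mk_qpos hQ hy
    have hsym : y ⬝ᵥ Q.mulVec x = c := mk_qsym hQ y x
    have h0 : 0 ≤ (b • x - c • y) ⬝ᵥ Q.mulVec (b • x - c • y) := mk_qnonneg hQ _
    have hexp : (b • x - c • y) ⬝ᵥ Q.mulVec (b • x - c • y)
        = b * b * a - b * c * c - c * (b * c) + c * (c * b) := by
      simp [Matrix.mulVec_sub, Matrix.mulVec_smul, sub_dotProduct,
        smul_dotProduct, dotProduct_sub, dotProduct_smul,
        smul_eq_mul, hsym, ← ha, ← hb, ← hc]
      ring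
    rw [hexp] at h0
    nlinarith [h0, hb0]

end aux2

section aux3
variable {n : ℕ} {Q : Matrix (Fin n) (Fin n) ℝ} {p x0 : Fin n → ℝ}

lemma mk_x0zero (hQ : Q.PosDef) (ha : x0 ⬝ᵥ Q.mulVec x0 = 0) : x0 = 0 := by
  by_contra h
  exact absurd ha (ne_of_gt (mk_qpos hQ h))

/-- key consequence of (i): a0 * π(x) = r0 * ⟨x0,x⟩_Q -/
lemma mk_key (hQ : Q.PosDef)
    (hi : (p ⬝ᵥ x0) • Q.mulVec x0 = (x0 ⬝ᵥ Q.mulVec x0) • p) (x : Fin n → ℝ) :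
    (x0 ⬝ᵥ Q.mulVec x0) * (p ⬝ᵥ x) = (p ⬝ᵥ x0) * (x0 ⬝ᵥ Q.mulVec x) := by
  have h := congrArg (fun v => v ⬝ᵥ x) hi
  simpa [smul_dotProduct, smul_eq_mul, dotProduct_comm (Q.mulVec x0) x,
    mk_qsym hQ x x0] using h.symm

/-- (i) → (iii) -/
lemma mk_A (hQ : Q.PosDef) (hr0 : 0 ≤ p ⬝ᵥ x0)
    (hi : (p ⬝ᵥ x0) • Q.mulVec x0 = (x0 ⬝ᵥ Q.mulVec x0) • p) :
    ∀ x : Fin n → ℝ, x ⬝ᵥ Q.mulVec x ≤ x0 ⬝ᵥ Q.mulVec x0 → p ⬝ᵥ x ≤ p ⬝ᵥ x0 := by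
  intro x hx
  by_cases ha : x0 ⬝ᵥ Q.mulVec x0 = 0
  · have hx0 : x0 = 0 := mk_x0zero hQ ha
    have hxz : x = 0 := by
      apply mk_x0zero hQ
      exact le_antisymm (by rw [← ha]; exact hx) (mk_qnonneg hQ x)
    simp [hx0, hxz]
  · have ha' : 0 < x0 ⬝ᵥ Q.mulVec x0 := lt_of_le_of_ne (mk_qnonneg hQ x0) (Ne.symm ha)
    have hcs := mk_qCS hQ x0 x
    have hkey := mk_key hQ hi x
    have h1 : (x0 ⬝ᵥ Q.mulVec x)^2 ≤ (x0 ⬝ᵥ Q.mulVec x0)^2 := by nlinarith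
    have h2 : x0 ⬝ᵥ Q.mulVec x ≤ x0 ⬝ᵥ Q.mulVec x0 := by
      nlinarith [sq_nonneg (x0 ⬝ᵥ Q.mulVec x - x0 ⬝ᵥ Q.mulVec x0)]
    nlinarith

/-- (i) → (v) -/
lemma mk_B (hQ : Q.PosDef) (hp : p ≠ 0) (hr0 : 0 ≤ p ⬝ᵥ x0)
    (hi : (p ⬝ᵥ x0) • Q.mulVec x0 = (x0 ⬝ᵥ Q.mulVec x0) • p) :
    ∀ x : Fin n → ℝ, p ⬝ᵥ x0 ≤ p ⬝ᵥ x → x0 ⬝ᵥ Q.mulVec x0 ≤ x ⬝ᵥ Q.mulVec x := by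
  intro x hx
  by_cases ha : x0 ⬝ᵥ Q.mulVec x0 = 0
  · rw [ha]; exact mk_qnonneg hQ x
  · have ha' : 0 < x0 ⬝ᵥ Q.mulVec x0 := lt_of_le_of_ne (mk_qnonneg hQ x0) (Ne.symm ha)
    have hr : 0 < p ⬝ᵥ x0 := by
      rcases lt_or_eq_of_le hr0 with h | h
      · exact h
      · exfalso
        rw [← h] at hi
        simp only [zero_smul] at hi
        rcases smul_eq_zero.mp hi.symm with h' | h'
        · exact ha h'
        · exact hp h'
    have hcs := mk_qCS hQ x0 x
    have hkey := mk_key hQ hi x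
    have hc : x0 ⬝ᵥ Q.mulVec x0 ≤ x0 ⬝ᵥ Q.mulVec x := by nlinarith
    nlinarith [mul_self_le_mul_self ha'.le hc]

/-- (iv) → (vi) -/
lemma mk_C (hQ : Q.PosDef) (hp : p ≠ 0) (hr0 : 0 ≤ p ⬝ᵥ x0)
    (h4 : ∀ x : Fin n → ℝ, x ⬝ᵥ Q.mulVec x = x0 ⬝ᵥ Q.mulVec x0 → p ⬝ᵥ x ≤ p ⬝ᵥ x0) :
    ∀ x : Fin n → ℝ, p ⬝ᵥ x = p ⬝ᵥ x0 → x0 ⬝ᵥ Q.mulVec x0 ≤ x ⬝ᵥ Q.mulVec x := by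
  intro x hx
  by_cases ha : x0 ⬝ᵥ Q.mulVec x0 = 0
  · rw [ha]; exact mk_qnonneg hQ x
  have ha' : 0 < x0 ⬝ᵥ Q.mulVec x0 := lt_of_le_of_ne (mk_qnonneg hQ x0) (Ne.symm ha)
  rcases lt_or_eq_of_le hr0 with hr | hr
  · -- r0 > 0
    by_contra hlt
    push_neg at hlt
    have hxne : x ≠ 0 := by
      intro h0
      rw [h0] at hx
      simp at hx
      rw [← hx] at hr
      exact lt_irrefl _ hr
    have hvx : 0 < x ⬝ᵥ Q.mulVec x := mk_qpos hQ hxne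
    set s := Real.sqrt ((x0 ⬝ᵥ Q.mulVec x0) / (x ⬝ᵥ Q.mulVec x)) with hs
    have hratio : 1 < (x0 ⬝ᵥ Q.mulVec x0) / (x ⬝ᵥ Q.mulVec x) :=
      (one_lt_div hvx).mpr hlt
    have hs1 : 1 < s := by
      rw [hs, show (1:ℝ) = Real.sqrt 1 by simp]
      exact Real.sqrt_lt_sqrt (by norm_num) hratio
    have hs2 : s ^ 2 = (x0 ⬝ᵥ Q.mulVec x0) / (x ⬝ᵥ Q.mulVec x) :=
      Real.sq_sqrt (by positivity)
    have hvy : (s • x) ⬝ᵥ Q.mulVec (s • x) = x0 ⬝ᵥ Q.mulVec x0 := by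
      simp only [Matrix.mulVec_smul, smul_dotProduct, dotProduct_smul,
        smul_eq_mul]
      rw [show s * (s * (x ⬝ᵥ Q.mulVec x)) = s ^ 2 * (x ⬝ᵥ Q.mulVec x) by ring, hs2]
      field_simp
    have := h4 (s • x) hvy
    simp only [dotProduct_smul, smul_eq_mul] at this
    rw [hx] at this
    nlinarith
  · -- r0 = 0 : contradiction with p ≠ 0
    exfalso
    have hvp : 0 < p ⬝ᵥ Q.mulVec p := mk_qpos hQ hp
    set s := Real.sqrt ((x0 ⬝ᵥ Q.mulVec x0) / (p ⬝ᵥ Q.mulVec p)) with hs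
    have hspos : 0 < s := Real.sqrt_pos.mpr (by positivity)
    have hs2 : s ^ 2 = (x0 ⬝ᵥ Q.mulVec x0) / (p ⬝ᵥ Q.mulVec p) :=
      Real.sq_sqrt (by positivity)
    have hvy : (s • p) ⬝ᵥ Q.mulVec (s • p) = x0 ⬝ᵥ Q.mulVec x0 := by
      simp only [Matrix.mulVec_smul, smul_dotProduct, dotProduct_smul,
        smul_eq_mul]
      rw [show s * (s * (p ⬝ᵥ Q.mulVec p)) = s ^ 2 * (p ⬝ᵥ Q.mulVec p) by ring, hs2]
      field_simp
    have hle := h4 (s • p) hvy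
    rw [← hr] at hle
    simp only [dotProduct_smul, smul_eq_mul] at hle
    have hpp : 0 < p ⬝ᵥ p := by
      have hnn : 0 ≤ p ⬝ᵥ p := Finset.sum_nonneg fun i _ => mul_self_nonneg (p i)
      rcases lt_or_eq_of_le hnn with h | h
      · exact h
      · exact absurd (dotProduct_self_eq_zero.mp h.symm) hp
    nlinarith

/-- (vi) → (i) -/
lemma mk_D (hQ : Q.PosDef) (hp : p ≠ 0)
    (h6 : ∀ x : Fin n → ℝ, p ⬝ᵥ x = p ⬝ᵥ x0 → x0 ⬝ᵥ Q.mulVec x0 ≤ x ⬝ᵥ Q.mulVec x) :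
    (p ⬝ᵥ x0) • Q.mulVec x0 = (x0 ⬝ᵥ Q.mulVec x0) • p := by
  -- Step 1: x0 is Q-orthogonal to every w with p ⬝ᵥ w = 0
  have step1 : ∀ w : Fin n → ℝ, p ⬝ᵥ w = 0 → x0 ⬝ᵥ Q.mulVec w = 0 := by
    intro w hw
    by_cases hwz : w = 0
    · simp [hwz]
    set c := x0 ⬝ᵥ Q.mulVec w with hc
    set q := w ⬝ᵥ Q.mulVec w with hqd
    have hq : 0 < q := mk_qpos hQ hwz
    have ht : ∀ t : ℝ, x0 ⬝ᵥ Q.mulVec x0 ≤ (x0 - t • w) ⬝ᵥ Q.mulVec (x0 - t • w) := by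
      intro t
      apply h6
      simp [dotProduct_sub, dotProduct_smul, hw]
    have hexp : ∀ t : ℝ, (x0 - t • w) ⬝ᵥ Q.mulVec (x0 - t • w)
        = x0 ⬝ᵥ Q.mulVec x0 - 2 * t * c + t ^ 2 * q := by
      intro t
      have hsym : w ⬝ᵥ Q.mulVec x0 = c := mk_qsym hQ w x0
      simp only [Matrix.mulVec_sub, Matrix.mulVec_smul, sub_dotProduct,
        smul_dotProduct, dotProduct_sub, dotProduct_smul,
        smul_eq_mul, hsym, ← hc, ← hqd]
      ring
    have h1 := ht (c / q)
    rw [hexp] at h1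
    have hc2 : c ^ 2 ≤ 0 := by
      have e : (-(2 * (c / q) * c) + (c / q) ^ 2 * q) * q = -c ^ 2 := by
        field_simp
        ring
      have h6 : (0:ℝ) ≤ -c ^ 2 := by
        rw [← e]
        exact mul_nonneg (by linarith) hq.le
      linarith
    have : c = 0 := by
      exact sq_eq_zero_iff.mp (le_antisymm hc2 (sq_nonneg c))
    exact this
  -- Step 2: Q x0 = λ • p
  have hpp : 0 < p ⬝ᵥ p := by
    have hnn : 0 ≤ p ⬝ᵥ p := Finset.sum_nonneg fun i _ => mul_self_nonneg (p i)
    rcases lt_or_eq_of_le hnn with h | h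
    · exact h
    · exact absurd (dotProduct_self_eq_zero.mp h.symm) hp
  set lam := (Q.mulVec x0 ⬝ᵥ p) / (p ⬝ᵥ p) with hlam
  set w := Q.mulVec x0 - lam • p with hwdef
  have hpw : p ⬝ᵥ w = 0 := by
    rw [hwdef]
    simp only [dotProduct_sub, dotProduct_smul, smul_eq_mul, hlam]
    rw [dotProduct_comm p (Q.mulVec x0)]
    field_simp
    simp
  have huw : Q.mulVec x0 ⬝ᵥ w = 0 := by
    rw [dotProduct_comm, mk_qsym hQ w x0]
    exact step1 w hpw
  have hww : w ⬝ᵥ w = 0 := by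
    have hexp2 : w ⬝ᵥ w = Q.mulVec x0 ⬝ᵥ w - lam * (p ⬝ᵥ w) := by
      conv_lhs => rw [hwdef]
      simp only [sub_dotProduct, smul_dotProduct, smul_eq_mul]
      rfl
    rw [hexp2, huw, hpw]
    ring
  have hwz : w = 0 := dotProduct_self_eq_zero.mp hww
  have hu : Q.mulVec x0 = lam • p := by
    have := sub_eq_zero.mp (hwdef ▸ hwz)
    exact this
  have ha0 : x0 ⬝ᵥ Q.mulVec x0 = lam * (p ⬝ᵥ x0) := by
    rw [hu]
    simp [dotProduct_smul, smul_eq_mul, dotProduct_comm x0 p]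
  rw [ha0, hu, smul_smul, mul_comm]

end aux3


/-- for x0 with a0 = v(x0), r0 = π(x0) ≥ 0, the following are
equivalent: (i) r0·Qx0 = a0·p; (ii) π(x0) = max{π : v ≤ a0} and v(x0) = min{v : π ≥ r0};
(iii) π(x0) = max{π : v ≤ a0}; (iv) π(x0) = max{π : v = a0};
(v) v(x0) = min{v : π ≥ r0}; (vi) v(x0) = min{v : π = r0}. -/
theorem markowitz_efficiency_equivalences {n : ℕ} (hn : 0 < n)
    (Q : Matrix (Fin n) (Fin n) ℝ) (hQ : Q.PosDef)
    (p : Fin n → ℝ) (hp : p ≠ 0)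
    (x0 : Fin n → ℝ) (hr0 : 0 ≤ p ⬝ᵥ x0) :
    ((p ⬝ᵥ x0) • Q.mulVec x0 = (x0 ⬝ᵥ Q.mulVec x0) • p ↔
      ((∀ x : Fin n → ℝ, x ⬝ᵥ Q.mulVec x ≤ x0 ⬝ᵥ Q.mulVec x0 → p ⬝ᵥ x ≤ p ⬝ᵥ x0) ∧
       (∀ x : Fin n → ℝ, p ⬝ᵥ x0 ≤ p ⬝ᵥ x → x0 ⬝ᵥ Q.mulVec x0 ≤ x ⬝ᵥ Q.mulVec x))) ∧
    ((p ⬝ᵥ x0) • Q.mulVec x0 = (x0 ⬝ᵥ Q.mulVec x0) • p ↔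
      (∀ x : Fin n → ℝ, x ⬝ᵥ Q.mulVec x ≤ x0 ⬝ᵥ Q.mulVec x0 → p ⬝ᵥ x ≤ p ⬝ᵥ x0)) ∧
    ((p ⬝ᵥ x0) • Q.mulVec x0 = (x0 ⬝ᵥ Q.mulVec x0) • p ↔
      (∀ x : Fin n → ℝ, x ⬝ᵥ Q.mulVec x = x0 ⬝ᵥ Q.mulVec x0 → p ⬝ᵥ x ≤ p ⬝ᵥ x0)) ∧
    ((p ⬝ᵥ x0) • Q.mulVec x0 = (x0 ⬝ᵥ Q.mulVec x0) • p ↔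
      (∀ x : Fin n → ℝ, p ⬝ᵥ x0 ≤ p ⬝ᵥ x → x0 ⬝ᵥ Q.mulVec x0 ≤ x ⬝ᵥ Q.mulVec x)) ∧
    ((p ⬝ᵥ x0) • Q.mulVec x0 = (x0 ⬝ᵥ Q.mulVec x0) • p ↔
      (∀ x : Fin n → ℝ, p ⬝ᵥ x = p ⬝ᵥ x0 → x0 ⬝ᵥ Q.mulVec x0 ≤ x ⬝ᵥ Q.mulVec x)) := by
  have hA := fun hi => mk_A (p := p) (x0 := x0) hQ hr0 hi
  have hB := fun hi => mk_B (p := p) (x0 := x0) hQ hp hr0 hi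
  have hC := fun h4 => mk_C (p := p) (x0 := x0) hQ hp hr0 h4
  have hD := fun h6 => mk_D (p := p) (x0 := x0) hQ hp h6
  have h34 : (∀ x : Fin n → ℝ, x ⬝ᵥ Q.mulVec x ≤ x0 ⬝ᵥ Q.mulVec x0 → p ⬝ᵥ x ≤ p ⬝ᵥ x0) →
      (∀ x : Fin n → ℝ, x ⬝ᵥ Q.mulVec x = x0 ⬝ᵥ Q.mulVec x0 → p ⬝ᵥ x ≤ p ⬝ᵥ x0) :=
    fun h x hx => h x (le_of_eq hx)
  have h56 : (∀ x : Fin n → ℝ, p ⬝ᵥ x0 ≤ p ⬝ᵥ x → x0 ⬝ᵥ Q.mulVec x0 ≤ x ⬝ᵥ Q.mulVec x) →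
      (∀ x : Fin n → ℝ, p ⬝ᵥ x = p ⬝ᵥ x0 → x0 ⬝ᵥ Q.mulVec x0 ≤ x ⬝ᵥ Q.mulVec x) :=
    fun h x hx => h x (le_of_eq hx.symm)
  exact ⟨⟨fun hi => ⟨hA hi, hB hi⟩, fun h => hD (hC (h34 h.1))⟩,
    ⟨fun hi => hA hi, fun h => hD (hC (h34 h))⟩,
    ⟨fun hi => h34 (hA hi), fun h => hD (hC h)⟩,
    ⟨fun hi => hB hi, fun h => hD (h56 h)⟩,
    ⟨fun hi => h56 (hB hi), fun h => hD h⟩⟩
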